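/- Let C ⊆ L0+ be convexly compact (convex, closed in the topology of convergence in probability, and bounded), and let (f_n)_{n∈ℕ} be a C-valued sequence. Then there exists a sequence (g_n)_{n∈ℕ} of forward convex combinations of (f_n)_{n∈ℕ} that converges P-almost surely to some g ∈ C. -/

import Mathlib

open MeasureTheory Filter Set

noncomputable section

variable {Ω : Type*} [MeasurableSpace Ω]

/-- The nonnegative orthant `L⁰₊` of the space `L⁰` of (a.e.-equivalence classes of)
random variables over `(Ω, ℱ, P)`. -/
def L0plus (P : Measure Ω) : Set (Ω →ₘ[P] ℝ) := {f | 0 ≤ f}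

/-- The metric `(f, g) ↦ E[1 ∧ |f - g|]` inducing the topology of convergence
in probability on `L⁰`. -/
def dist0 (P : Measure Ω) (f g : Ω →ₘ[P] ℝ) : ℝ :=
  ∫ ω, min 1 |f ω - g ω| ∂P

/-- Convergence in probability of a sequence in `L⁰`. -/
def Tendsto0 (P : Measure Ω) (f : ℕ → Ω →ₘ[P] ℝ) (g : Ω →ₘ[P] ℝ) : Prop :=
  Tendsto (fun n => dist0 P (f n) g) atTop (nhds 0)

/-- Closure of a set in `L⁰` with respect to the topology of convergence in probability. -/
def closure0 (P : Measure Ω) (C : Set (Ω →ₘ[P] ℝ)) : Set (Ω →ₘ[P] ℝ) :=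
  {f | ∀ ε : ℝ, 0 < ε → ∃ g ∈ C, dist0 P f g < ε}

/-- A set of `L⁰` is closed iff it contains its closure. -/
def IsClosed0 (P : Measure Ω) (C : Set (Ω →ₘ[P] ℝ)) : Prop :=
  closure0 P C ⊆ C

/-- Boundedness (in probability) of a set `C ⊆ L⁰₊` : `lim_{ℓ → ∞} sup_{f ∈ C} P[f > ℓ] = 0`. -/
def Bounded0 (P : Measure Ω) (C : Set (Ω →ₘ[P] ℝ)) : Prop :=
  Tendsto (fun ℓ : ℝ => ⨆ f ∈ C, P {ω | ℓ < f ω}) atTop (nhds 0)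

/-- The set `C^max` of maximal elements of `C ⊆ L⁰₊` : `f ∈ C` such that `f ≤ g` a.s.
and `g ∈ C` imply `f = g` a.s. -/
def maxSet (P : Measure Ω) (C : Set (Ω →ₘ[P] ℝ)) : Set (Ω →ₘ[P] ℝ) :=
  {f | f ∈ C ∧ ∀ g ∈ C, f ≤ g → f = g}

/-- `C` is max-closed if every maximal element of its closure already belongs to `C`. -/
def MaxClosed (P : Measure Ω) (C : Set (Ω →ₘ[P] ℝ)) : Prop :=
  maxSet P (closure0 P C) ⊆ C

/-- The pairing `⟨μ, f⟩ = ∫ f dμ ∈ [0, ∞]` between a nonnegative measure `μ` and `f ∈ L⁰₊`. -/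
def pairing {P : Measure Ω} (μ : Measure Ω) (f : Ω →ₘ[P] ℝ) : ENNReal :=
  ∫⁻ ω, ENNReal.ofReal (f ω) ∂μ

/-- The set `C^osp` of outer support points of `C ⊆ L⁰₊`: points `g ∈ C^max` for which there
is a σ-finite nonnegative measure `μ ≪ P` with `0 < sup_{f ∈ C} ⟨μ, f⟩ = ⟨μ, g⟩ < ∞`;
by convention `{0}^osp = {0}`. -/
def osp (P : Measure Ω) (C : Set (Ω →ₘ[P] ℝ)) : Set (Ω →ₘ[P] ℝ) :=
  {g | g ∈ maxSet P C ∧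
    (C = {0} ∨ ∃ μ : Measure Ω, μ ≪ P ∧ SigmaFinite μ ∧
      0 < pairing μ g ∧ pairing μ g < ⊤ ∧ (⨆ f ∈ C, pairing μ f) = pairing μ g)}

/-- The solid hull of `C ⊆ L⁰₊`. -/
def solidHull (P : Measure Ω) (C : Set (Ω →ₘ[P] ℝ)) : Set (Ω →ₘ[P] ℝ) :=
  {f | f ∈ L0plus P ∧ ∃ g ∈ C, f ≤ g}

/-- A set `S ⊆ L⁰₊` is solid if `g ∈ S` and `0 ≤ f ≤ g` imply `f ∈ S`. -/
def Solid (P : Measure Ω) (S : Set (Ω →ₘ[P] ℝ)) : Prop :=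
  ∀ g ∈ S, ∀ f : Ω →ₘ[P] ℝ, 0 ≤ f → f ≤ g → f ∈ S

/-- `(g n)` is a sequence of forward convex combinations of `(f n)`. -/
def ForwardConvexComb (P : Measure Ω) (f g : ℕ → Ω →ₘ[P] ℝ) : Prop :=
  ∀ n : ℕ, g n ∈ convexHull ℝ (f '' Set.Ici n)

end

section AuxLemmas

private lemma exp_sq_identity (x y : ℝ) :
    (Real.exp (-x / 2) - Real.exp (-y / 2)) ^ 2 =
      2 * (1 - Real.exp (-((2:ℝ)⁻¹ * x + (2:ℝ)⁻¹ * y))) -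
        (1 - Real.exp (-x)) - (1 - Real.exp (-y)) := by
  have hx : Real.exp (-x / 2) * Real.exp (-x / 2) = Real.exp (-x) := by
    rw [← Real.exp_add]; congr 1; ring
  have hy : Real.exp (-y / 2) * Real.exp (-y / 2) = Real.exp (-y) := by
    rw [← Real.exp_add]; congr 1; ring
  have hxy : Real.exp (-x / 2) * Real.exp (-y / 2)
      = Real.exp (-((2:ℝ)⁻¹ * x + (2:ℝ)⁻¹ * y)) := by
    rw [← Real.exp_add]; congr 1; ring
  linear_combination hx + hy - 2 * hxy

/-- The concave functional `u(h) = E[1 - e^{-h}]`. -/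
private noncomputable def uu {Ω : Type*} [MeasurableSpace Ω] (P : Measure Ω)
    (h : Ω →ₘ[P] ℝ) : ℝ :=
  ∫ ω, (1 - Real.exp (-(h ω))) ∂P

end AuxLemmas

/-- forward convex combinations converging a.s.. If `C ⊆ L⁰₊` is convexly
compact and `(f n)` is a `C`-valued sequence, then there is a sequence `(g n)` of forward
convex combinations of `(f n)` converging `P`-a.s. to some `g∞ ∈ C`. -/
theorem statement5 {Ω : Type*} [MeasurableSpace Ω] (P : Measure Ω) [IsProbabilityMeasure P]
    (C : Set (Ω →ₘ[P] ℝ)) (hCL0 : C ⊆ L0plus P)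
    (hconv : Convex ℝ C) (hcl : IsClosed0 P C) (hbdd : Bounded0 P C)
    (f : ℕ → Ω →ₘ[P] ℝ) (hf : ∀ n, f n ∈ C) :
    ∃ g : ℕ → Ω →ₘ[P] ℝ, ∃ glim ∈ C, ForwardConvexComb P f g ∧
      ∀ᵐ ω ∂P, Tendsto (fun n => g n ω) atTop (nhds (glim ω)) := by
  classical
  -- basic facts about the tail convex hulls
  have hDC : ∀ k : ℕ, convexHull ℝ (f '' Set.Ici k) ⊆ C := fun k =>
    convexHull_min (by rintro _ ⟨m, _, rfl⟩; exact hf m) hconv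
  have hDmono : ∀ {p q : ℕ}, p ≤ q →
      convexHull ℝ (f '' Set.Ici q) ⊆ convexHull ℝ (f '' Set.Ici p) := fun h =>
    convexHull_mono (Set.image_mono (Set.Ici_subset_Ici.2 h))
  have hfD : ∀ k : ℕ, f k ∈ convexHull ℝ (f '' Set.Ici k) := fun k =>
    subset_convexHull ℝ _ ⟨k, le_refl k, rfl⟩
  -- nonnegativity
  have hnn : ∀ h ∈ C, ∀ᵐ ω ∂P, 0 ≤ h ω := by
    intro h hh
    have h0 : ((0 : Ω →ₘ[P] ℝ) : Ω → ℝ) ≤ᵐ[P] h := AEEqFun.coeFn_le.2 (hCL0 hh)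
    filter_upwards [h0, AEEqFun.coeFn_zero (μ := P) (β := ℝ)] with ω h1 h2
    rw [h2] at h1; exact h1
  -- integrability of the integrand defining `uu`
  have hmeasInt : ∀ h : Ω →ₘ[P] ℝ, (∀ᵐ ω ∂P, 0 ≤ h ω) →
      Integrable (fun ω => 1 - Real.exp (-(h ω))) P := by
    intro h h0
    refine (integrable_const (1:ℝ)).mono' ?_ ?_
    · exact (measurable_const.sub
        (Real.measurable_exp.comp h.measurable.neg)).aestronglyMeasurable
    · filter_upwards [h0] with ω hω
      have h1 : Real.exp (-(h ω)) ≤ 1 := Real.exp_le_one_iff.2 (by linarith)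
      have h2 : (0:ℝ) < Real.exp (-(h ω)) := Real.exp_pos _
      rw [Real.norm_eq_abs, abs_of_nonneg (by linarith)]
      linarith
  -- bounds on uu
  have hu0 : ∀ h : Ω →ₘ[P] ℝ, (∀ᵐ ω ∂P, 0 ≤ h ω) → 0 ≤ uu P h := by
    intro h h0
    refine integral_nonneg_of_ae ?_
    filter_upwards [h0] with ω hω
    have h1 := Real.exp_le_one_iff.2 (by linarith : -(h ω) ≤ 0)
    simp only [Pi.zero_apply]
    linarith
  have hu1 : ∀ h : Ω →ₘ[P] ℝ, (∀ᵐ ω ∂P, 0 ≤ h ω) → uu P h ≤ 1 := by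
    intro h h0
    have h1 : uu P h ≤ ∫ _ω, (1:ℝ) ∂P := by
      refine integral_mono_ae (hmeasInt h h0) (integrable_const 1) ?_
      filter_upwards [h0] with ω hω
      have := Real.exp_pos (-(h ω)); linarith
    simpa using h1
  -- the suprema over tail hulls
  set A : ℕ → ℝ := fun k => sSup (uu P '' convexHull ℝ (f '' Set.Ici k)) with hA
  have hAbdd : ∀ k, BddAbove (uu P '' convexHull ℝ (f '' Set.Ici k)) := by
    intro k
    refine ⟨1, ?_⟩
    rintro _ ⟨h, hh, rfl⟩
    exact hu1 h (hnn h (hDC k hh))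
  have hAne : ∀ k, (uu P '' convexHull ℝ (f '' Set.Ici k)).Nonempty := fun k =>
    ⟨uu P (f k), f k, hfD k, rfl⟩
  have hAanti : Antitone A := fun p q hpq =>
    csSup_le_csSup (hAbdd p) (hAne q) (Set.image_mono (hDmono hpq))
  have hAlb : ∀ k, (0:ℝ) ≤ A k := fun k =>
    (hu0 _ (hnn _ (hf k))).trans (le_csSup (hAbdd k) ⟨f k, hfD k, rfl⟩)
  set al : ℝ := ⨅ k, A k with hal
  have hbdl : BddBelow (Set.range A) := ⟨0, by rintro _ ⟨k, rfl⟩; exact hAlb k⟩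
  have hAtendsto : Tendsto A atTop (nhds al) := tendsto_atTop_ciInf hAanti hbdl
  have halleA : ∀ k, al ≤ A k := fun k => ciInf_le hbdl k
  -- near-optimizers
  have hwex : ∀ k : ℕ, ∃ v ∈ convexHull ℝ (f '' Set.Ici k),
      A k - 1/((k:ℝ)+1) < uu P v := by
    intro k
    have hlt : A k - 1/((k:ℝ)+1) < A k := by
      have : (0:ℝ) < 1/((k:ℝ)+1) := by positivity
      linarith
    obtain ⟨x, hx, hlt'⟩ := exists_lt_of_lt_csSup (hAne k) hlt
    obtain ⟨v, hv, rfl⟩ := hx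
    exact ⟨v, hv, hlt'⟩
  choose w hwD hwu using hwex
  have hwC : ∀ k, w k ∈ C := fun k => hDC k (hwD k)
  have hwnn : ∀ k, ∀ᵐ ω ∂P, 0 ≤ w k ω := fun k => hnn _ (hwC k)
  -- the transformed sequence
  set aa : ℕ → Ω → ℝ := fun k ω => Real.exp (-(w k ω) / 2) with haa
  have haameas : ∀ k, Measurable (aa k) := fun k =>
    Real.measurable_exp.comp ((w k).measurable.neg.div_const 2)
  have haapos : ∀ k ω, 0 < aa k ω := fun k ω => Real.exp_pos _
  have haale : ∀ k, ∀ᵐ ω ∂P, aa k ω ≤ 1 := by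
    intro k
    filter_upwards [hwnn k] with ω hω
    exact Real.exp_le_one_iff.2 (by linarith)
  -- integrability of squared differences
  have hsqint : ∀ p q : ℕ, Integrable (fun ω => (aa p ω - aa q ω)^2) P := by
    intro p q
    refine (integrable_const (1:ℝ)).mono' ?_ ?_
    · exact (((haameas p).sub (haameas q)).pow_const 2).aestronglyMeasurable
    · filter_upwards [haale p, haale q] with ω h1 h2
      have g1 := haapos p ω; have g2 := haapos q ω
      rw [Real.norm_eq_abs, abs_of_nonneg (sq_nonneg _)]
      nlinarith
  -- the key quantitative concavity estimate
  have key : ∀ p q : ℕ, p ≤ q →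
      ∫ ω, (aa p ω - aa q ω) ^ 2 ∂P ≤ (A p - al) + 2 * (1/((p:ℝ)+1)) := by
    intro p q hpq
    set mid : Ω →ₘ[P] ℝ := (2⁻¹ : ℝ) • w p + (2⁻¹ : ℝ) • w q with hmid
    have hmidD : mid ∈ convexHull ℝ (f '' Set.Ici p) :=
      (convex_convexHull ℝ (f '' Set.Ici p)) (hwD p) (hDmono hpq (hwD q))
        (by norm_num) (by norm_num) (by norm_num)
    have hmidnn : ∀ᵐ ω ∂P, 0 ≤ mid ω := hnn mid (hDC p hmidD)
    have humid : uu P mid ≤ A p := le_csSup (hAbdd p) ⟨mid, hmidD, rfl⟩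
    have hcoe : ∀ᵐ ω ∂P, mid ω = 2⁻¹ * (w p ω) + 2⁻¹ * (w q ω) := by
      filter_upwards [AEEqFun.coeFn_add ((2⁻¹:ℝ) • w p) ((2⁻¹:ℝ) • w q),
        AEEqFun.coeFn_smul (2⁻¹:ℝ) (w p), AEEqFun.coeFn_smul (2⁻¹:ℝ) (w q)]
        with ω h1 h2 h3
      rw [hmid, h1, Pi.add_apply, h2, h3, Pi.smul_apply, Pi.smul_apply,
        smul_eq_mul, smul_eq_mul]
    have hptwise : ∀ᵐ ω ∂P, (aa p ω - aa q ω)^2 =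
        2*(1 - Real.exp (-(mid ω))) - (1 - Real.exp (-(w p ω)))
          - (1 - Real.exp (-(w q ω))) := by
      filter_upwards [hcoe] with ω hω
      rw [haa]
      simp only []
      rw [hω]
      exact exp_sq_identity (w p ω) (w q ω)
    have hint1 : Integrable (fun ω => 1 - Real.exp (-(mid ω))) P := hmeasInt mid hmidnn
    have hintp := hmeasInt (w p) (hwnn p)
    have hintq := hmeasInt (w q) (hwnn q)
    have i2 : Integrable (fun ω => 2*(1 - Real.exp (-(mid ω)))) P := hint1.const_mul 2
    have i3 : Integrable (fun ω => 2*(1 - Real.exp (-(mid ω)))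
        - (1 - Real.exp (-(w p ω)))) P := i2.sub hintp
    have hIeq : ∫ ω, (aa p ω - aa q ω)^2 ∂P
        = 2 * uu P mid - uu P (w p) - uu P (w q) := by
      rw [integral_congr_ae hptwise]
      calc ∫ ω, (2*(1 - Real.exp (-(mid ω))) - (1 - Real.exp (-(w p ω)))
              - (1 - Real.exp (-(w q ω)))) ∂P
          = (∫ ω, (2*(1 - Real.exp (-(mid ω))) - (1 - Real.exp (-(w p ω)))) ∂P)
              - ∫ ω, (1 - Real.exp (-(w q ω))) ∂P := integral_sub i3 hintq
        _ = ((∫ ω, 2*(1 - Real.exp (-(mid ω))) ∂P)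
              - ∫ ω, (1 - Real.exp (-(w p ω))) ∂P)
              - ∫ ω, (1 - Real.exp (-(w q ω))) ∂P := by rw [integral_sub i2 hintp]
        _ = 2 * uu P mid - uu P (w p) - uu P (w q) := by
              rw [integral_const_mul]; rfl
    have h1 : A p - 1/((p:ℝ)+1) < uu P (w p) := hwu p
    have h2 : A q - 1/((q:ℝ)+1) < uu P (w q) := hwu q
    have h3 : al ≤ A q := halleA q
    have h4 : 1/((q:ℝ)+1) ≤ 1/((p:ℝ)+1) := by
      apply one_div_le_one_div_of_le
      · positivity
      · have : (p:ℝ) ≤ (q:ℝ) := by exact_mod_cast hpq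
        linarith
    rw [hIeq]
    linarith
  -- the error term tends to zero
  have heps : Tendsto (fun p : ℕ => (A p - al) + 2 * (1/((p:ℝ)+1))) atTop (nhds 0) := by
    have l1 : Tendsto (fun p => A p - al) atTop (nhds 0) := by
      simpa using hAtendsto.sub (tendsto_const_nhds (x := al))
    have l2 : Tendsto (fun p : ℕ => 2 * (1/((p:ℝ)+1))) atTop (nhds 0) := by
      have := tendsto_one_div_add_atTop_nhds_zero_nat.const_mul (2:ℝ)
      simpa using this
    simpa using l1.add l2
  -- choose the subsequence indices
  have hNex : ∀ k : ℕ, ∃ N, ∀ p ≥ N,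
      (A p - al) + 2 * (1/((p:ℝ)+1)) < (8:ℝ)⁻¹ ^ k := by
    intro k
    have hpos : (0:ℝ) < (8:ℝ)⁻¹ ^ k := by positivity
    exact eventually_atTop.1 (heps.eventually_lt_const hpos)
  choose N hN using hNex
  set ns : ℕ → ℕ := fun k =>
    Nat.rec (N 0) (fun k ih => max (ih + 1) (max (N (k+1)) (k+1))) k with hns
  have hns0 : ns 0 = N 0 := rfl
  have hnssucc : ∀ k, ns (k+1) = max (ns k + 1) (max (N (k+1)) (k+1)) := fun k => rfl
  have hnsN : ∀ k, N k ≤ ns k := by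
    intro k
    cases k with
    | zero => exact le_of_eq hns0.symm
    | succ m => rw [hnssucc]; exact le_trans (le_max_left _ _) (le_max_right _ _)
  have hnsk : ∀ k, k ≤ ns k := by
    intro k
    cases k with
    | zero => exact Nat.zero_le _
    | succ m => rw [hnssucc]; exact le_trans (le_max_right _ _) (le_max_right _ _)
  have hnsle : ∀ k, ns k ≤ ns (k+1) := by
    intro k
    rw [hnssucc]
    exact le_trans (Nat.le_succ _) (le_max_left _ _)
  -- the squared differences are geometrically small
  have hdk : ∀ k, ∫ ω, (aa (ns k) ω - aa (ns (k+1)) ω)^2 ∂P ≤ (8:ℝ)⁻¹ ^ k := by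
    intro k
    exact (key (ns k) (ns (k+1)) (hnsle k)).trans
      (le_of_lt (hN k (ns k) (hnsN k)))
  -- Borel-Cantelli for the bad sets
  set s : ℕ → Set Ω := fun k =>
    {ω | (2:ℝ)⁻¹ ^ k ≤ |aa (ns k) ω - aa (ns (k+1)) ω|} with hs
  have hsle : ∀ k, P (s k) ≤ ENNReal.ofReal ((2:ℝ)⁻¹ ^ k) := by
    intro k
    have hsub : s k ⊆ {ω | ENNReal.ofReal ((4:ℝ)⁻¹ ^ k)
        ≤ ENNReal.ofReal ((aa (ns k) ω - aa (ns (k+1)) ω)^2)} := by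
      intro ω hω
      rw [hs] at hω
      simp only [Set.mem_setOf_eq] at hω ⊢
      apply ENNReal.ofReal_le_ofReal
      have hsq : ((2:ℝ)⁻¹ ^ k)^2 = (4:ℝ)⁻¹ ^ k := by
        rw [← pow_mul, mul_comm, pow_mul]; norm_num
      rw [← hsq, ← sq_abs (aa (ns k) ω - aa (ns (k+1)) ω)]
      exact pow_le_pow_left₀ (by positivity) hω 2
    have heps0 : (ENNReal.ofReal ((4:ℝ)⁻¹ ^ k)) ≠ 0 := by
      simp only [ne_eq, ENNReal.ofReal_eq_zero, not_le]
      positivity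
    have hm := meas_ge_le_lintegral_div (μ := P)
      (f := fun ω => ENNReal.ofReal ((aa (ns k) ω - aa (ns (k+1)) ω)^2))
      ((((haameas (ns k)).sub (haameas (ns (k+1)))).pow_const 2).ennreal_ofReal.aemeasurable)
      heps0 ENNReal.ofReal_ne_top
    have hlint : ∫⁻ ω, ENNReal.ofReal ((aa (ns k) ω - aa (ns (k+1)) ω)^2) ∂P
        = ENNReal.ofReal (∫ ω, (aa (ns k) ω - aa (ns (k+1)) ω)^2 ∂P) :=
      (ofReal_integral_eq_lintegral_ofReal (hsqint _ _)
        (Eventually.of_forall fun ω => sq_nonneg _)).symm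
    calc P (s k) ≤ P {ω | ENNReal.ofReal ((4:ℝ)⁻¹ ^ k)
          ≤ ENNReal.ofReal ((aa (ns k) ω - aa (ns (k+1)) ω)^2)} := measure_mono hsub
    _ ≤ (∫⁻ ω, ENNReal.ofReal ((aa (ns k) ω - aa (ns (k+1)) ω)^2) ∂P)
          / ENNReal.ofReal ((4:ℝ)⁻¹ ^ k) := hm
    _ = ENNReal.ofReal (∫ ω, (aa (ns k) ω - aa (ns (k+1)) ω)^2 ∂P)
          / ENNReal.ofReal ((4:ℝ)⁻¹ ^ k) := by rw [hlint]
    _ ≤ ENNReal.ofReal ((8:ℝ)⁻¹ ^ k) / ENNReal.ofReal ((4:ℝ)⁻¹ ^ k) := by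
          gcongr
          exact hdk k
    _ = ENNReal.ofReal ((8:ℝ)⁻¹ ^ k / (4:ℝ)⁻¹ ^ k) :=
          (ENNReal.ofReal_div_of_pos (by positivity)).symm
    _ = ENNReal.ofReal ((2:ℝ)⁻¹ ^ k) := by rw [← div_pow]; norm_num
  have hsum : (∑' k, P (s k)) ≠ ⊤ := by
    have hle : (∑' k, P (s k)) ≤ ∑' k : ℕ, (2⁻¹ : ENNReal) ^ k := by
      refine ENNReal.tsum_le_tsum fun k => le_trans (hsle k) ?_
      rw [ENNReal.ofReal_pow (by norm_num), ENNReal.ofReal_inv_of_pos (by norm_num),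
        ENNReal.ofReal_ofNat]
    refine ne_top_of_le_ne_top ?_ hle
    rw [ENNReal.tsum_geometric, ENNReal.one_sub_inv_two]
    simp
  have hBC : ∀ᵐ ω ∂P, ∀ᶠ k in atTop, ω ∉ s k := ae_eventually_notMem hsum
  -- a.e. convergence of the transformed subsequence
  set hl : Ω → ℝ := fun ω => limUnder atTop (fun k => aa (ns k) ω) with hhl
  have hconvae : ∀ᵐ ω ∂P,
      Tendsto (fun k => aa (ns k) ω) atTop (nhds (hl ω)) := by
    filter_upwards [hBC] with ω hω
    have hsummable : Summable (fun k => aa (ns k) ω - aa (ns (k+1)) ω) := by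
      refine Summable.of_norm_bounded_eventually (g := fun k => (2:ℝ)⁻¹ ^ k)
        (summable_geometric_of_lt_one (by norm_num) (by norm_num)) ?_
      rw [Nat.cofinite_eq_atTop]
      filter_upwards [hω] with k hk
      rw [hs] at hk
      simp only [Set.mem_setOf_eq, not_le] at hk
      rw [Real.norm_eq_abs]
      exact le_of_lt hk
    have hpartial := hsummable.hasSum.tendsto_sum_nat
    have htel : ∀ k, ∑ j ∈ Finset.range k, (aa (ns j) ω - aa (ns (j+1)) ω)
        = aa (ns 0) ω - aa (ns k) ω := fun k =>
      Finset.sum_range_sub' (fun j => aa (ns j) ω) k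
    have h2 : Tendsto (fun k => aa (ns k) ω) atTop
        (nhds (aa (ns 0) ω - ∑' j, (aa (ns j) ω - aa (ns (j+1)) ω))) := by
      have h3 := tendsto_const_nhds (x := aa (ns 0) ω) (f := atTop (α := ℕ))
      have h4 := h3.sub hpartial
      refine h4.congr (fun k => ?_)
      rw [htel]; ring
    rw [hhl]
    simp only []
    rw [h2.limUnder_eq]
    exact h2
  -- the limit is a.e. strictly positive (uses boundedness of C)
  have hposae : ∀ᵐ ω ∂P,
      Tendsto (fun k => aa (ns k) ω) atTop (nhds (hl ω)) → 0 < hl ω := by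
    set E : Set Ω := {ω | Tendsto (fun k => aa (ns k) ω) atTop (nhds (hl ω))
      ∧ hl ω ≤ 0} with hE
    have hEnull : P E = 0 := by
      have hEle : ∀ M : ℝ, P E ≤ ⨆ g ∈ C, P {ω | M < g ω} := by
        intro M
        set B : ℕ → Set Ω := fun K => ⋂ k, ⋂ (_ : K ≤ k), {ω | M < w (ns k) ω}
          with hB
        have hBmono : Monotone B := by
          intro K K' hKK' ω hω
          rw [hB] at hω ⊢
          simp only [Set.mem_iInter] at hω ⊢
          exact fun k hk => hω k (hKK'.trans hk)
        have hEB : E ⊆ ⋃ K, B K := by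
          intro ω hω
          rw [hE] at hω
          obtain ⟨htd, hle⟩ := hω
          have hev : ∀ᶠ k in atTop, aa (ns k) ω < Real.exp (-M/2) :=
            htd.eventually_lt_const (lt_of_le_of_lt hle (Real.exp_pos _))
          obtain ⟨K, hK⟩ := eventually_atTop.1 hev
          refine Set.mem_iUnion.2 ⟨K, ?_⟩
          rw [hB]
          simp only [Set.mem_iInter, Set.mem_setOf_eq]
          intro k hk
          have h5 := hK k hk
          rw [haa] at h5
          simp only [] at h5
          have h6 := Real.exp_lt_exp.1 h5
          linarith
        calc P E ≤ P (⋃ K, B K) := measure_mono hEB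
        _ ≤ ⨆ g ∈ C, P {ω | M < g ω} := by
            refine le_of_tendsto' (tendsto_measure_iUnion_atTop hBmono) (fun K => ?_)
            have h7 : P (B K) ≤ P {ω | M < w (ns K) ω} := by
              refine measure_mono ?_
              intro ω hω
              rw [hB] at hω
              simp only [Set.mem_iInter] at hω
              exact hω K le_rfl
            exact h7.trans (le_biSup (fun g => P {ω | M < g ω}) (hwC (ns K)))
      have h8 : P E ≤ 0 := ge_of_tendsto hbdd (Eventually.of_forall hEle)
      exact le_antisymm h8 zero_le
    have h9 : ∀ᵐ ω ∂P, ω ∉ E := (measure_eq_zero_iff_ae_notMem (μ := P)).1 hEnull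
    filter_upwards [h9] with ω hω htd
    by_contra hcon
    exact hω ⟨htd, not_lt.1 hcon⟩
  -- a.e. convergence of the original subsequence to -2 log (hl)
  have htendae : ∀ᵐ ω ∂P,
      Tendsto (fun k => w (ns k) ω) atTop (nhds (-2 * Real.log (hl ω))) := by
    filter_upwards [hconvae, hposae] with ω h1 h2
    have hpos := h2 h1
    have hlog : Tendsto (fun k => Real.log (aa (ns k) ω)) atTop
        (nhds (Real.log (hl ω))) :=
      ((Real.continuousAt_log hpos.ne').tendsto).comp h1
    have h3 : Tendsto (fun k => -2 * Real.log (aa (ns k) ω)) atTop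
        (nhds (-2 * Real.log (hl ω))) := hlog.const_mul (-2)
    refine h3.congr (fun k => ?_)
    rw [haa]
    simp only []
    rw [Real.log_exp]
    ring
  have hglimMeas : AEStronglyMeasurable (fun ω => -2 * Real.log (hl ω)) P :=
    aestronglyMeasurable_of_tendsto_ae atTop
      (fun k => (w (ns k)).aestronglyMeasurable) htendae
  set glim : Ω →ₘ[P] ℝ := AEEqFun.mk _ hglimMeas with hglim
  have hglimcoe : ⇑glim =ᵐ[P] fun ω => -2 * Real.log (hl ω) := AEEqFun.coeFn_mk _ _
  have htend2 : ∀ᵐ ω ∂P, Tendsto (fun k => w (ns k) ω) atTop (nhds (glim ω)) := by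
    filter_upwards [htendae, hglimcoe] with ω h1 h2
    rw [h2]
    exact h1
  -- glim belongs to C by closedness
  have hdist : Tendsto (fun k => dist0 P glim (w (ns k))) atTop (nhds 0) := by
    have h0 : (0:ℝ) = ∫ (_ω : Ω), (0:ℝ) ∂P := by simp
    rw [h0]
    simp only [dist0]
    refine tendsto_integral_of_dominated_convergence (fun _ => (1:ℝ)) ?_
      (integrable_const 1) ?_ ?_
    · intro k
      exact (measurable_const.min
        ((glim.measurable.sub (w (ns k)).measurable).abs)).aestronglyMeasurable
    · intro k
      refine Eventually.of_forall (fun ω => ?_)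
      rw [Real.norm_eq_abs, abs_of_nonneg (le_min zero_le_one (abs_nonneg _))]
      exact min_le_left _ _
    · filter_upwards [htend2] with ω hω
      have h1 : Tendsto (fun k => glim ω - w (ns k) ω) atTop
          (nhds (glim ω - glim ω)) := tendsto_const_nhds.sub hω
      have h2 := h1.abs
      have h3 := (tendsto_const_nhds (x := (1:ℝ)) (f := atTop (α := ℕ))).min h2
      simpa using h3
  have hglimC : glim ∈ C := by
    apply hcl
    intro ε hε
    obtain ⟨k, hk⟩ := (hdist.eventually_lt_const hε).exists
    exact ⟨w (ns k), hwC (ns k), hk⟩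
  -- conclusion
  refine ⟨fun k => w (ns k), glim, hglimC, ?_, htend2⟩
  intro k
  exact hDmono (hnsk k) (hwD (ns k))
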